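/- Let k > 0, \lambda > 0, \gamma > 0 be fixed and n \ge 0 an integer. Then the function \nu \mapsto \frac{(\gamma)_{n,k}\,\Gamma_k(\nu+1)}{\Gamma_k(\lambda n + \nu + 1)} is log-convex on (-1, \infty), i.e., \nu \mapsto \log\Big(\frac{(\gamma)_{n,k}\,\Gamma_k(\nu+1)}{\Gamma_k(\lambda n + \nu + 1)}\Big) is convex on (-1, \infty). -/

import Mathlib

/-- The k-gamma function `Γ_k(x) = k^(x/k - 1) Γ(x/k)`. -/
noncomputable def kGamma (k x : ℝ) : ℝ := k ^ (x / k - 1) * Real.Gamma (x / k)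

/-- The k-Pochhammer symbol `(x)_{n,k} = ∏_{j=0}^{n-1} (x + j k)`. -/
noncomputable def kPoch (x k : ℝ) (n : ℕ) : ℝ := ∏ j ∈ Finset.range n, (x + (j : ℝ) * k)

/-- The modified k-Bessel function of the first kind. -/
noncomputable def kBesselI (k ν γ lam x : ℝ) : ℝ :=
  ∑' n : ℕ, kPoch γ k n / (kGamma k (lam * n + ν + 1) * ((n.factorial : ℝ)) ^ 2) * (x / 2) ^ n

/-- The k-confluent hypergeometric function `Φ_k(a; c; x)`. -/
noncomputable def kPhi (k a c x : ℝ) : ℝ :=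
  ∑' n : ℕ, kPoch a k n / (kPoch c k n * (n.factorial : ℝ)) * x ^ n

/-- The k-digamma function `Ψ_k`. -/
noncomputable def kPsi (k t : ℝ) : ℝ :=
  (Real.log k - Real.eulerMascheroniConstant) / k - 1 / t +
    ∑' n : ℕ, t / (((n : ℝ) + 1) * k * (((n : ℝ) + 1) * k + t))

open Real Filter Set Topology

private lemma base' (c d : ℝ) (hd : 0 ≤ d) (hdc : d ≤ c) :
    ConvexOn ℝ (Set.Ioi (0:ℝ)) (fun x => Real.log (x + c) - Real.log (x + d)) := by
  have hc : 0 ≤ c := hd.trans hdc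
  apply convexOn_of_hasDerivWithinAt2_nonneg (f' := fun x => (x+c)⁻¹ - (x+d)⁻¹)
    (f'' := fun x => ((x+d)^2)⁻¹ - ((x+c)^2)⁻¹) (convex_Ioi 0)
  · apply ContinuousOn.sub
    · exact ((continuousOn_id.add continuousOn_const).log
        (fun x hx => by have : (0:ℝ) < x := hx; show x + c ≠ 0; positivity))
    · exact ((continuousOn_id.add continuousOn_const).log
        (fun x hx => by have : (0:ℝ) < x := hx; show x + d ≠ 0; positivity))
  · intro x hx
    rw [interior_Ioi] at hx
    have hx : (0:ℝ) < x := hx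
    have h1 : (0:ℝ) < x + c := by positivity
    have h2 : (0:ℝ) < x + d := by positivity
    have d1 := (((hasDerivAt_id x).add_const c).log h1.ne')
    have d2 := (((hasDerivAt_id x).add_const d).log h2.ne')
    have := (d1.sub d2).hasDerivWithinAt (s := interior (Set.Ioi (0:ℝ)))
    simpa [one_div, Pi.sub_def] using this
  · intro x hx
    rw [interior_Ioi] at hx
    have hx : (0:ℝ) < x := hx
    have h1 : (0:ℝ) < x + c := by positivity
    have h2 : (0:ℝ) < x + d := by positivity
    have d1 := (((hasDerivAt_id x).add_const c).inv h1.ne')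
    have d2 := (((hasDerivAt_id x).add_const d).inv h2.ne')
    have := (d1.sub d2).hasDerivWithinAt (s := interior (Set.Ioi (0:ℝ)))
    simp only [Pi.sub_def, Pi.inv_apply, id] at this
    exact this.congr_deriv (by ring)
  · intro x hx
    rw [interior_Ioi] at hx
    have hx : (0:ℝ) < x := hx
    have h1 : (0:ℝ) < x + c := by positivity
    have h2 : (0:ℝ) < x + d := by positivity
    rw [sub_nonneg]
    gcongr

private lemma convexOn_sum' {ι : Type*} (t : Finset ι) (f : ι → ℝ → ℝ) (s : Set ℝ)
    (hs : Convex ℝ s) (hf : ∀ i ∈ t, ConvexOn ℝ s (f i)) :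
    ConvexOn ℝ s (fun x => ∑ i ∈ t, f i x) := by
  classical
  induction t using Finset.cons_induction with
  | empty => simpa using convexOn_const 0 hs
  | cons i t hit ih =>
      simp only [Finset.sum_cons]
      exact (hf i (Finset.mem_cons_self _ _)).add
        (ih fun j hj => hf j (Finset.mem_cons_of_mem hj))

private lemma gammaDiff' (a : ℝ) (ha : 0 ≤ a) :
    ConvexOn ℝ (Set.Ioi (0:ℝ))
      (fun x => Real.log (Real.Gamma x) - Real.log (Real.Gamma (x + a))) := by
  set G : ℕ → ℝ → ℝ := fun m x =>
    (∑ j ∈ Finset.range (m+1), (Real.log (x + (a + j)) - Real.log (x + j)))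
      + (-(a * Real.log m)) with hGdef
  have hGconv : ∀ m, ConvexOn ℝ (Set.Ioi (0:ℝ)) (G m) := by
    intro m
    exact (convexOn_sum' (Finset.range (m+1))
      (fun (j : ℕ) x => Real.log (x + (a + j)) - Real.log (x + j)) _ (convex_Ioi 0)
      fun j _ => base' (a + j) j (Nat.cast_nonneg j)
        (by have : (0:ℝ) ≤ j := Nat.cast_nonneg j; linarith)).add
      (convexOn_const _ (convex_Ioi 0))
  have hGtend : ∀ x ∈ Set.Ioi (0:ℝ), Tendsto (fun m => G m x) atTop
      (𝓝 (Real.log (Real.Gamma x) - Real.log (Real.Gamma (x + a)))) := by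
    intro x hx
    have hx : (0:ℝ) < x := hx
    have hxa : (0:ℝ) < x + a := by linarith
    have h1 : Tendsto (fun m : ℕ =>
        Real.log (Real.GammaSeq x m) - Real.log (Real.GammaSeq (x+a) m)) atTop
        (𝓝 (Real.log (Real.Gamma x) - Real.log (Real.Gamma (x + a)))) := by
      exact (((Real.continuousAt_log (Real.Gamma_pos_of_pos hx).ne').tendsto.comp
        (Real.GammaSeq_tendsto_Gamma x)).sub
        ((Real.continuousAt_log (Real.Gamma_pos_of_pos hxa).ne').tendsto.comp
        (Real.GammaSeq_tendsto_Gamma (x+a))))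
    refine h1.congr' ?_
    filter_upwards [eventually_ge_atTop 1] with m hm
    have hm0 : (0:ℝ) < m := by exact_mod_cast hm
    have hlogseq : ∀ z : ℝ, 0 < z → Real.log (Real.GammaSeq z m)
        = z * Real.log m + Real.log (m.factorial)
          - ∑ j ∈ Finset.range (m+1), Real.log (z + j) := by
      intro z hz
      have hprod : ∀ j ∈ Finset.range (m+1), z + (j:ℝ) ≠ 0 := by
        intro j _; positivity
      rw [Real.GammaSeq, Real.log_div, Real.log_mul, Real.log_rpow hm0,
        Real.log_prod hprod]
      · exact (Real.rpow_pos_of_pos hm0 z).ne'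
      · exact_mod_cast (m.factorial_pos).ne'
      · exact (mul_pos (Real.rpow_pos_of_pos hm0 z)
          (by exact_mod_cast m.factorial_pos)).ne'
      · exact Finset.prod_ne_zero_iff.mpr hprod
    rw [hlogseq x hx, hlogseq (x+a) hxa]
    have hsum : ∑ j ∈ Finset.range (m+1), Real.log (x + a + (j:ℝ))
        = ∑ j ∈ Finset.range (m+1), Real.log (x + (a + (j:ℝ))) := by
      refine Finset.sum_congr rfl fun j _ => by rw [add_assoc]
    rw [hsum]
    simp only [hGdef, Finset.sum_sub_distrib]
    ring
  constructor
  · exact convex_Ioi 0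
  intro x hx y hy p q hp hq hpq
  have hmem : p • x + q • y ∈ Set.Ioi (0:ℝ) := (convex_Ioi 0) hx hy hp hq hpq
  refine le_of_tendsto_of_tendsto' (hGtend _ hmem)
    (((hGtend x hx).const_mul p).add ((hGtend y hy).const_mul q)) ?_
  intro m
  simpa [smul_eq_mul] using (hGconv m).2 hx hy hp hq hpq


/-- log-convexity in ν of the coefficient
`(γ)_{n,k} Γ_k(ν+1)/Γ_k(λn+ν+1)`. -/
theorem kBessel_coeff_logConvex
    (k lam γ : ℝ) (n : ℕ) (hk : 0 < k) (hlam : 0 < lam) (hγ : 0 < γ) :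
    ConvexOn ℝ (Set.Ioi (-1 : ℝ))
      (fun ν => Real.log (kPoch γ k n * kGamma k (ν + 1) / kGamma k (lam * n + ν + 1))) := by
  set a : ℝ := lam * n / k with ha_def
  have ha : 0 ≤ a := by positivity
  have hG := gammaDiff' a ha
  -- convexity of the composition with the affine map ν ↦ (ν+1)/k
  have hcomp : ConvexOn ℝ (Set.Ioi (-1:ℝ))
      (fun ν => Real.log (Real.Gamma ((ν+1)/k)) - Real.log (Real.Gamma ((ν+1)/k + a))) := by
    refine ⟨convex_Ioi _, ?_⟩
    intro x hx y hy p q hp hq hpq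
    have hx' : (x+1)/k ∈ Set.Ioi (0:ℝ) := by
      have : (-1:ℝ) < x := hx
      have : (0:ℝ) < x + 1 := by linarith
      exact div_pos this hk
    have hy' : (y+1)/k ∈ Set.Ioi (0:ℝ) := by
      have : (-1:ℝ) < y := hy
      have : (0:ℝ) < y + 1 := by linarith
      exact div_pos this hk
    have key : (p • x + q • y + 1)/k = p • ((x+1)/k) + q • ((y+1)/k) := by
      simp only [smul_eq_mul]
      have h : p*x+q*y+1 = p*(x+1)+q*(y+1) := by linear_combination -hpq
      rw [h]; ring
    simp only []
    rw [key]
    simpa [smul_eq_mul] using hG.2 hx' hy' hp hq hpq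
  have hconv2 := hcomp.add
    (convexOn_const (Real.log (kPoch γ k n) - a * Real.log k) (convex_Ioi (-1:ℝ)))
  -- the two functions agree on Ioi (-1)
  have hC : 0 < kPoch γ k n := by
    refine Finset.prod_pos fun j _ => ?_
    positivity
  have heq : ∀ ν ∈ Set.Ioi (-1:ℝ),
      Real.log (kPoch γ k n * kGamma k (ν + 1) / kGamma k (lam * n + ν + 1))
      = (Real.log (Real.Gamma ((ν+1)/k)) - Real.log (Real.Gamma ((ν+1)/k + a)))
        + (Real.log (kPoch γ k n) - a * Real.log k) := by
    intro ν hν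
    have hν : (-1:ℝ) < ν := hν
    have hu : (0:ℝ) < (ν+1)/k := div_pos (by linarith) hk
    have hv : (0:ℝ) < (lam*n+ν+1)/k := by
      have h1 : (0:ℝ) ≤ lam * n := by positivity
      exact div_pos (by linarith) hk
    have hvu : (lam * n + ν + 1)/k = (ν+1)/k + a := by
      rw [ha_def]; field_simp; ring
    have hΓu := Real.Gamma_pos_of_pos hu
    have hΓv := Real.Gamma_pos_of_pos hv
    have hk1 : (0:ℝ) < k ^ ((ν+1)/k - 1) := Real.rpow_pos_of_pos hk _
    have hk2 : (0:ℝ) < k ^ ((lam*n+ν+1)/k - 1) := Real.rpow_pos_of_pos hk _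
    rw [kGamma, kGamma, Real.log_div (by positivity) (by positivity),
      Real.log_mul hC.ne' (by positivity), Real.log_mul hk1.ne' hΓu.ne',
      Real.log_mul hk2.ne' hΓv.ne', Real.log_rpow hk, Real.log_rpow hk, hvu, ha_def]
    ring
  refine ⟨convex_Ioi _, ?_⟩
  intro x hx y hy p q hp hq hpq
  have hmem : p • x + q • y ∈ Set.Ioi (-1:ℝ) := (convex_Ioi (-1:ℝ)) hx hy hp hq hpq
  calc Real.log (kPoch γ k n * kGamma k ((p • x + q • y) + 1)
        / kGamma k (lam * n + (p • x + q • y) + 1))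
      = _ := heq _ hmem
    _ ≤ p • _ + q • _ := hconv2.2 hx hy hp hq hpq
    _ = p • Real.log (kPoch γ k n * kGamma k (x + 1) / kGamma k (lam * n + x + 1))
        + q • Real.log (kPoch γ k n * kGamma k (y + 1) / kGamma k (lam * n + y + 1)) := by
        simp only [Pi.add_apply]
        rw [heq _ hx, heq _ hy]
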